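/- Let N = {1, …, n} be a finite node set and let F be a Borel probability measure on ℝ. Define, for each simple graph x on N with adjacency indicators (x_{ij}, {i,j} ∈ D(N)), P(x) = ∫_{ℝⁿ} Π_{{i,j} ∈ D(N)} [ e^{(β_i + β_j) x_{ij}} / (1 + e^{β_i + β_j}) ] dFⁿ(β), where Fⁿ is the n-fold product of F. Then P is a probability distribution on the set of simple graphs on N (the marginal beta model), and the random network X with distribution P satisfies: (i) X is exchangeable; (ii) X is dissociated; and (iii) P is summarized, i.e., P(x) = P(y) whenever x and y have the same degree distribution (n_j(x) = n_j(y) for all j ≥ 0). -/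

import Mathlib

open MeasureTheory
open scoped Classical

/-- The type of dyads over a node set `V`: unordered pairs of distinct nodes. -/
abbrev Dyad (V : Type*) : Type _ := {d : Sym2 V // ¬ d.IsDiag}

/-- The action of a permutation of the node set on dyads. -/
def dyadPerm {V : Type*} (π : Equiv.Perm V) (d : Dyad V) : Dyad V :=
  ⟨d.1.map π, by rw [Sym2.isDiag_map (Equiv.injective π)]; exact d.2⟩

/-- Both endpoints of the dyad `d` belong to the node set `s`. -/
def dyadIn {V : Type*} (d : Dyad V) (s : Set V) : Prop := ∀ v ∈ d.1, v ∈ s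

/-- The sum `β_i + β_j` of the values of `β` at the two endpoints of a dyad. -/
def dyadSum {V : Type*} (β : V → ℝ) (d : Dyad V) : ℝ :=
  Sym2.lift ⟨fun i j => β i + β j, fun _ _ => add_comm _ _⟩ d.1

/-- The marginal beta model: `P(x) = ∫ Π_{ij} e^{(β_i+β_j) x_{ij}} / (1 + e^{β_i+β_j})
dFⁿ(β)`, where `Fⁿ` is the `n`-fold product of the mixing distribution `F`. -/
noncomputable def betaP {V : Type*} [Fintype V] [DecidableEq V]
    (F : Measure ℝ) (x : Dyad V → Bool) : ℝ :=
  ∫ β : V → ℝ, (∏ d : Dyad V,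
      Real.exp (dyadSum β d * (if x d then 1 else 0)) / (1 + Real.exp (dyadSum β d)))
    ∂(Measure.pi fun _ : V => F)

/-- The degree of the node `i` in the network `x`. -/
noncomputable def netDeg {V : Type*} [Fintype V] [DecidableEq V]
    (x : Dyad V → Bool) (i : V) : ℕ :=
  (Finset.univ.filter fun d : Dyad V => i ∈ d.1 ∧ x d = true).card

/-- `netDegDist x j` is the number of nodes of `x` having degree `j`
(the degree distribution of the network `x`). -/
noncomputable def netDegDist {V : Type*} [Fintype V] [DecidableEq V]
    (x : Dyad V → Bool) (j : ℕ) : ℕ :=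
  (Finset.univ.filter fun i : V => netDeg x i = j).card

/-! ### Auxiliary material -/

/-- The single dyad factor of the beta model. -/
noncomputable def F2 (s : ℝ) (b : Bool) : ℝ :=
  Real.exp (s * (if b then 1 else 0)) / (1 + Real.exp s)

lemma onePexp_pos (s : ℝ) : (0:ℝ) < 1 + Real.exp s := by positivity

lemma F2_pos (s : ℝ) (b : Bool) : 0 < F2 s b :=
  div_pos (Real.exp_pos _) (onePexp_pos s)

lemma F2_le_one (s : ℝ) (b : Bool) : F2 s b ≤ 1 := by
  cases b <;> rw [F2, div_le_one (onePexp_pos s)] <;> simp <;>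
    linarith [Real.exp_pos s]

lemma F2_sum (s : ℝ) : F2 s false + F2 s true = 1 := by
  rw [F2, F2]
  simp only [Bool.false_eq_true, if_false, if_true, mul_zero, mul_one, Real.exp_zero]
  rw [← add_div, div_self (onePexp_pos s).ne']

lemma measurable_F2 {α : Type*} [MeasurableSpace α] {f : α → ℝ} (hf : Measurable f) (b : Bool) :
    Measurable fun a => F2 (f a) b := by
  unfold F2
  exact ((hf.mul_const _).exp).div (measurable_const.add hf.exp)

/-- The permutation of dyads induced by a permutation of nodes, as an equivalence. -/
def dyadPermEquiv {V : Type*} (π : Equiv.Perm V) : Dyad V ≃ Dyad V where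
  toFun := dyadPerm π
  invFun := dyadPerm π.symm
  left_inv d := Subtype.ext (by simp [dyadPerm, Sym2.map_map])
  right_inv d := Subtype.ext (by simp [dyadPerm, Sym2.map_map])

lemma dyadSum_comp {V : Type*} (π : Equiv.Perm V) (β : V → ℝ) (d : Dyad V) :
    dyadSum (fun v => β (π v)) d = dyadSum β (dyadPerm π d) := by
  obtain ⟨d, hd⟩ := d
  induction d using Sym2.ind with
  | _ i j => rfl

lemma measurable_dyadSum {V : Type*} [Fintype V] (d : Dyad V) :
    Measurable fun β : V → ℝ => dyadSum β d := by
  obtain ⟨d, hd⟩ := d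
  induction d using Sym2.ind with
  | _ i j => exact (measurable_pi_apply i).add (measurable_pi_apply j)

lemma dyadSum_congr {V : Type*} {β β' : V → ℝ} {S : Set V} (d : Dyad V)
    (hd : dyadIn d S) (h : ∀ v ∈ S, β v = β' v) : dyadSum β d = dyadSum β' d := by
  obtain ⟨d, hnd⟩ := d
  induction d using Sym2.ind with
  | _ i j =>
    have hi : i ∈ S := hd i (Sym2.mem_mk_left i j)
    have hj : j ∈ S := hd j (Sym2.mem_mk_right i j)
    show β i + β j = β' i + β' j
    rw [h i hi, h j hj]

section Beta

variable {V : Type*} [Fintype V] [DecidableEq V] (F : Measure ℝ) [IsProbabilityMeasure F]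

lemma betaP_eq (x : Dyad V → Bool) :
    betaP F x = ∫ β : V → ℝ, (∏ d : Dyad V, F2 (dyadSum β d) (x d))
      ∂(Measure.pi fun _ : V => F) := rfl

omit [IsProbabilityMeasure F] in
lemma measurable_prodF2 (x : Dyad V → Bool) :
    Measurable fun β : V → ℝ => ∏ d : Dyad V, F2 (dyadSum β d) (x d) :=
  Finset.measurable_prod _ fun d _ => measurable_F2 (measurable_dyadSum d) _

lemma integrable_prodF2 (x : Dyad V → Bool) :
    Integrable (fun β : V → ℝ => ∏ d : Dyad V, F2 (dyadSum β d) (x d))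
      (Measure.pi fun _ : V => F) := by
  refine Integrable.mono' (integrable_const (1:ℝ))
    (measurable_prodF2 x).aestronglyMeasurable (ae_of_all _ fun β => ?_)
  rw [Real.norm_eq_abs, abs_of_nonneg (Finset.prod_nonneg fun d _ => (F2_pos _ _).le)]
  exact Finset.prod_le_one (fun d _ => (F2_pos _ _).le) (fun d _ => F2_le_one _ _)

/-- Change of variables by a node permutation. -/
lemma integral_comp_perm (π : Equiv.Perm V) (G : (V → ℝ) → ℝ) :
    ∫ β : V → ℝ, G (fun v => β (π v)) ∂(Measure.pi fun _ : V => F)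
      = ∫ β : V → ℝ, G β ∂(Measure.pi fun _ : V => F) := by
  have h := measurePreserving_piCongrLeft (fun _ : V => F) π.symm
  have h2 := h.integral_comp' (g := G)
  rw [← h2]
  refine integral_congr_ae (ae_of_all _ fun β => ?_)
  have hβ : (MeasurableEquiv.piCongrLeft (fun _ : V => ℝ) π.symm) β = fun v => β (π v) := by
    ext v
    simp [MeasurableEquiv.piCongrLeft, Equiv.piCongrLeft]
  show G (fun v => β (π v)) = G ((MeasurableEquiv.piCongrLeft (fun _ : V => ℝ) π.symm) β)
  rw [hβ]

end Beta

/-- Generic lemma: sum over configurations constrained on a set of indices. -/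
lemma sum_filter_prod_eq {ι : Type*} [Fintype ι] [DecidableEq ι]
    (P : ι → Prop) (f : ι → Bool) [DecidablePred P]
    [DecidablePred fun x : ι → Bool => ∀ i, P i → x i = f i]
    (h : ι → Bool → ℝ)
    (h1 : ∀ i, h i false + h i true = 1) :
    ∑ x ∈ Finset.univ.filter (fun x : ι → Bool => ∀ i, P i → x i = f i),
        ∏ i, h i (x i)
      = ∏ i ∈ Finset.univ.filter P, h i (f i) := by
  classical
  have hset : Finset.univ.filter (fun x : ι → Bool => ∀ i, P i → x i = f i)
      = Fintype.piFinset (fun i => if P i then {f i} else Finset.univ) := by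
    ext x
    simp only [Finset.mem_filter, Finset.mem_univ, true_and, Fintype.mem_piFinset]
    refine forall_congr' fun i => ?_
    by_cases hP : P i <;> simp [hP]
  rw [hset, ← Finset.prod_univ_sum, Finset.prod_filter]
  refine Finset.prod_congr rfl fun i _ => ?_
  by_cases hP : P i <;> simp [hP]
  rw [add_comm]
  exact h1 i

section Main

variable {V : Type*} [Fintype V] [DecidableEq V] (F : Measure ℝ) [IsProbabilityMeasure F]

lemma betaP_perm (π : Equiv.Perm V) (x : Dyad V → Bool) :
    betaP F (fun d => x (dyadPerm π d)) = betaP F x := by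
  rw [betaP_eq, betaP_eq]
  rw [← integral_comp_perm F π
    (fun β => ∏ d : Dyad V, F2 (dyadSum β d) (x (dyadPerm π d)))]
  refine integral_congr_ae (ae_of_all _ fun β => ?_)
  calc ∏ d : Dyad V, F2 (dyadSum (fun v => β (π v)) d) (x (dyadPerm π d))
      = ∏ d : Dyad V, F2 (dyadSum β (dyadPermEquiv π d)) (x (dyadPermEquiv π d)) := by
        refine Finset.prod_congr rfl fun d _ => ?_
        rw [dyadSum_comp]
        rfl
    _ = ∏ d : Dyad V, F2 (dyadSum β d) (x d) :=
        Equiv.prod_comp (dyadPermEquiv π) (fun d => F2 (dyadSum β d) (x d))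

/-- Factorization of the integral of a product of functions depending on
disjoint sets of coordinates. -/
lemma integral_mul_of_disjoint (N₁ N₂ : Set V) (hd : Disjoint N₁ N₂)
    (A B : (V → ℝ) → ℝ)
    (hA : ∀ β β' : V → ℝ, (∀ v ∈ N₁, β v = β' v) → A β = A β')
    (hB : ∀ β β' : V → ℝ, (∀ v ∈ N₂, β v = β' v) → B β = B β') :
    ∫ β, A β * B β ∂(Measure.pi fun _ : V => F)
      = (∫ β, A β ∂(Measure.pi fun _ : V => F))
        * ∫ β, B β ∂(Measure.pi fun _ : V => F) := by
  set p : V → Prop := fun v => v ∈ N₁ with hp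
  have hMP := measurePreserving_piEquivPiSubtypeProd (fun _ : V => F) p
  set e := MeasurableEquiv.piEquivPiSubtypeProd (fun _ : V => ℝ) p with he
  set μ₁ : Measure ({v // p v} → ℝ) := Measure.pi fun _ => F with hμ₁
  set μ₂ : Measure ({v // ¬ p v} → ℝ) := Measure.pi fun _ => F with hμ₂
  set A₁ : ({v // p v} → ℝ) → ℝ :=
    fun u => A (fun v => if h : p v then u ⟨v, h⟩ else 0) with hA₁
  set B₁ : ({v // ¬ p v} → ℝ) → ℝ :=
    fun w => B (fun v => if h : p v then 0 else w ⟨v, h⟩) with hB₁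
  have hAe : ∀ β : V → ℝ, A β = A₁ (fun i => β i.1) := by
    intro β
    refine hA β _ fun v hv => ?_
    simp [dif_pos (show p v from hv)]
  have hBe : ∀ β : V → ℝ, B β = B₁ (fun i => β i.1) := by
    intro β
    refine hB β _ fun v hv => ?_
    have hv' : ¬ p v := fun h => Set.disjoint_left.mp hd h hv
    simp [dif_neg hv']
  have heapp : ∀ β : V → ℝ, e β = (fun i : {v // p v} => β i.1, fun i : {v // ¬ p v} => β i.1) :=
    fun β => rfl
  have key : ∀ (A' : ({v // p v} → ℝ) → ℝ) (B' : ({v // ¬ p v} → ℝ) → ℝ),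
      ∫ β, A' (fun i : {v // p v} => β i.1) * B' (fun i : {v // ¬ p v} => β i.1)
        ∂(Measure.pi fun _ : V => F) = (∫ u, A' u ∂μ₁) * ∫ w, B' w ∂μ₂ := by
    intro A' B'
    have h2 := hMP.integral_comp' (g := fun z : ({v // p v} → ℝ) × ({v // ¬ p v} → ℝ) =>
      A' z.1 * B' z.2)
    rw [← integral_prod_mul A' B', ← h2]
    rfl
  calc ∫ β, A β * B β ∂(Measure.pi fun _ : V => F)
      = ∫ β, A₁ (fun i : {v // p v} => β i.1) * B₁ (fun i : {v // ¬ p v} => β i.1)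
          ∂(Measure.pi fun _ : V => F) := by
        refine integral_congr_ae (ae_of_all _ fun β => ?_)
        show A β * B β = (A₁ fun i => β ↑i) * B₁ fun i => β ↑i
        rw [hAe β, hBe β]
    _ = (∫ u, A₁ u ∂μ₁) * ∫ w, B₁ w ∂μ₂ := key A₁ B₁
    _ = (∫ β, A β ∂(Measure.pi fun _ : V => F))
          * ∫ β, B β ∂(Measure.pi fun _ : V => F) := by
        have e1 : ∫ β, A β ∂(Measure.pi fun _ : V => F) = (∫ u, A₁ u ∂μ₁) * ∫ _, (1:ℝ) ∂μ₂ := by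
          rw [← key A₁ (fun _ => 1)]
          refine integral_congr_ae (ae_of_all _ fun β => ?_)
          show A β = A₁ (fun i => β ↑i) * 1
          rw [hAe β, mul_one]
        have e2 : ∫ β, B β ∂(Measure.pi fun _ : V => F) = (∫ _, (1:ℝ) ∂μ₁) * ∫ w, B₁ w ∂μ₂ := by
          rw [← key (fun _ => 1) B₁]
          refine integral_congr_ae (ae_of_all _ fun β => ?_)
          show B β = 1 * B₁ (fun i => β ↑i)
          rw [hBe β, one_mul]
        rw [e1, e2]
        simp


omit [Fintype V] [DecidableEq V] in
lemma dyadSum_eq_sum_mem [Fintype V] [DecidableEq V] (β : V → ℝ) (d : Dyad V) :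
    dyadSum β d = ∑ v ∈ Finset.univ.filter (· ∈ d.1), β v := by
  obtain ⟨d, hd⟩ := d
  induction d using Sym2.ind with
  | _ i j =>
    have hij : i ≠ j := by simpa [Sym2.mk_isDiag_iff] using hd
    have hf : Finset.univ.filter (· ∈ (⟨s(i,j), hd⟩ : Dyad V).1) = {i, j} := by
      ext v
      simp [Sym2.mem_iff]
    rw [hf, Finset.sum_pair hij]
    rfl

lemma sum_dyadSum_filter (β : V → ℝ) (x : Dyad V → Bool) :
    ∑ d ∈ Finset.univ.filter (fun d : Dyad V => x d = true), dyadSum β d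
      = ∑ v, (netDeg x v : ℝ) * β v := by
  calc ∑ d ∈ Finset.univ.filter (fun d : Dyad V => x d = true), dyadSum β d
      = ∑ d ∈ Finset.univ.filter (fun d : Dyad V => x d = true),
          ∑ v, if v ∈ d.1 then β v else 0 := by
        refine Finset.sum_congr rfl fun d _ => ?_
        rw [dyadSum_eq_sum_mem, Finset.sum_filter]
    _ = ∑ v, ∑ d ∈ Finset.univ.filter (fun d : Dyad V => x d = true),
          if v ∈ d.1 then β v else 0 := Finset.sum_comm
    _ = ∑ v, (netDeg x v : ℝ) * β v := by
        refine Finset.sum_congr rfl fun v _ => ?_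
        rw [← Finset.sum_filter, Finset.filter_filter, Finset.sum_const, nsmul_eq_mul]
        congr 2
        rw [netDeg]
        congr 1
        exact Finset.filter_congr fun d _ => and_comm

lemma prodF2_eq_deg (β : V → ℝ) (x : Dyad V → Bool) :
    ∏ d : Dyad V, F2 (dyadSum β d) (x d)
      = Real.exp (∑ v, (netDeg x v : ℝ) * β v)
        / ∏ d : Dyad V, (1 + Real.exp (dyadSum β d)) := by
  unfold F2
  rw [Finset.prod_div_distrib, ← Real.exp_sum]
  congr 2
  calc ∑ d : Dyad V, dyadSum β d * (if x d then 1 else 0)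
      = ∑ d : Dyad V, if x d = true then dyadSum β d else 0 := by
        refine Finset.sum_congr rfl fun d _ => ?_
        by_cases h : x d <;> simp [h]
    _ = ∑ d ∈ Finset.univ.filter (fun d : Dyad V => x d = true), dyadSum β d :=
        (Finset.sum_filter _ _).symm
    _ = ∑ v, (netDeg x v : ℝ) * β v := sum_dyadSum_filter β x

lemma exists_perm_netDeg (x y : Dyad V → Bool)
    (hdeg : ∀ j : ℕ, netDegDist x j = netDegDist y j) :
    ∃ π : Equiv.Perm V, ∀ v, netDeg y (π v) = netDeg x v := by
  set f := netDeg y with hf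
  set g := netDeg x with hg
  have hcard : ∀ j : ℕ, Fintype.card {v // g v = j} = Fintype.card {v // f v = j} := by
    intro j
    rw [Fintype.card_subtype, Fintype.card_subtype]
    exact hdeg j
  let c : ∀ j : ℕ, {v // g v = j} ≃ {v // f v = j} := fun j => Fintype.equivOfCardEq (hcard j)
  refine ⟨(Equiv.sigmaFiberEquiv g).symm.trans
    ((Equiv.sigmaCongrRight c).trans (Equiv.sigmaFiberEquiv f)), fun v => ?_⟩
  exact (c (g v) ⟨v, rfl⟩).2

lemma betaP_summarized (x y : Dyad V → Bool)
    (hdeg : ∀ j : ℕ, netDegDist x j = netDegDist y j) : betaP F x = betaP F y := by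
  obtain ⟨π, hπ⟩ := exists_perm_netDeg x y hdeg
  rw [betaP_eq, betaP_eq]
  calc ∫ β : V → ℝ, ∏ d : Dyad V, F2 (dyadSum β d) (x d) ∂(Measure.pi fun _ : V => F)
      = ∫ β : V → ℝ, Real.exp (∑ v, (netDeg x v : ℝ) * β v)
          / ∏ d : Dyad V, (1 + Real.exp (dyadSum β d)) ∂(Measure.pi fun _ : V => F) :=
        integral_congr_ae (ae_of_all _ fun β => prodF2_eq_deg β x)
    _ = ∫ β : V → ℝ, Real.exp (∑ v, (netDeg x v : ℝ) * β (π v))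
          / ∏ d : Dyad V, (1 + Real.exp (dyadSum (fun v => β (π v)) d))
          ∂(Measure.pi fun _ : V => F) :=
        (integral_comp_perm F π (fun β => Real.exp (∑ v, (netDeg x v : ℝ) * β v)
          / ∏ d : Dyad V, (1 + Real.exp (dyadSum β d)))).symm
    _ = ∫ β : V → ℝ, Real.exp (∑ v, (netDeg y v : ℝ) * β v)
          / ∏ d : Dyad V, (1 + Real.exp (dyadSum β d)) ∂(Measure.pi fun _ : V => F) := by
        refine integral_congr_ae (ae_of_all _ fun β => ?_)
        have h1 : ∑ v, (netDeg x v : ℝ) * β (π v) = ∑ v, (netDeg y v : ℝ) * β v := by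
          calc ∑ v, (netDeg x v : ℝ) * β (π v)
              = ∑ v, (netDeg y (π v) : ℝ) * β (π v) :=
                Finset.sum_congr rfl fun v _ => by rw [hπ v]
            _ = ∑ v, (netDeg y v : ℝ) * β v :=
                Equiv.sum_comp π (fun v => (netDeg y v : ℝ) * β v)
        have h2 : ∏ d : Dyad V, (1 + Real.exp (dyadSum (fun v => β (π v)) d))
            = ∏ d : Dyad V, (1 + Real.exp (dyadSum β d)) := by
          calc ∏ d : Dyad V, (1 + Real.exp (dyadSum (fun v => β (π v)) d))
              = ∏ d : Dyad V, (1 + Real.exp (dyadSum β (dyadPermEquiv π d))) :=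
                Finset.prod_congr rfl fun d _ => by rw [dyadSum_comp]; rfl
            _ = ∏ d : Dyad V, (1 + Real.exp (dyadSum β d)) :=
                Equiv.prod_comp (dyadPermEquiv π) (fun d => 1 + Real.exp (dyadSum β d))
        beta_reduce
        rw [h1, h2]
    _ = ∫ β : V → ℝ, ∏ d : Dyad V, F2 (dyadSum β d) (y d) ∂(Measure.pi fun _ : V => F) :=
        integral_congr_ae (ae_of_all _ fun β => (prodF2_eq_deg β y).symm)

lemma sum_bool_F2 (s : ℝ) : ∑ b : Bool, F2 s b = 1 := by
  rw [Fintype.sum_bool, add_comm]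
  exact F2_sum s

lemma betaP_sum_one : ∑ x : Dyad V → Bool, betaP F x = 1 := by
  calc ∑ x : Dyad V → Bool, betaP F x
      = ∑ x : Dyad V → Bool, ∫ β : V → ℝ, ∏ d : Dyad V, F2 (dyadSum β d) (x d)
          ∂(Measure.pi fun _ : V => F) := Finset.sum_congr rfl fun x _ => betaP_eq F x
    _ = ∫ β : V → ℝ, ∑ x : Dyad V → Bool, ∏ d : Dyad V, F2 (dyadSum β d) (x d)
          ∂(Measure.pi fun _ : V => F) :=
        (integral_finset_sum _ (fun x _ => integrable_prodF2 F x)).symm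
    _ = ∫ _ : V → ℝ, (1:ℝ) ∂(Measure.pi fun _ : V => F) := by
        refine integral_congr_ae (ae_of_all _ fun β => ?_)
        beta_reduce
        rw [← Fintype.piFinset_univ, Finset.sum_prod_piFinset]
        refine Finset.prod_eq_one fun d _ => ?_
        rw [Fintype.sum_bool, add_comm]
        exact F2_sum _
    _ = 1 := by simp


lemma sum_betaP_filter (P : Dyad V → Prop) [DecidablePred P] (f : Dyad V → Bool)
    [DecidablePred fun x : Dyad V → Bool => ∀ d, P d → x d = f d] :
    ∑ x ∈ Finset.univ.filter (fun x : Dyad V → Bool => ∀ d, P d → x d = f d), betaP F x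
      = ∫ β : V → ℝ, ∏ d ∈ Finset.univ.filter P, F2 (dyadSum β d) (f d)
        ∂(Measure.pi fun _ : V => F) := by
  calc ∑ x ∈ Finset.univ.filter (fun x : Dyad V → Bool => ∀ d, P d → x d = f d), betaP F x
      = ∑ x ∈ Finset.univ.filter (fun x : Dyad V → Bool => ∀ d, P d → x d = f d),
          ∫ β : V → ℝ, ∏ d : Dyad V, F2 (dyadSum β d) (x d)
            ∂(Measure.pi fun _ : V => F) := Finset.sum_congr rfl fun x _ => betaP_eq F x
    _ = ∫ β : V → ℝ, ∑ x ∈ Finset.univ.filter (fun x : Dyad V → Bool => ∀ d, P d → x d = f d),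
          ∏ d : Dyad V, F2 (dyadSum β d) (x d) ∂(Measure.pi fun _ : V => F) :=
        (integral_finset_sum _ (fun x _ => integrable_prodF2 F x)).symm
    _ = ∫ β : V → ℝ, ∏ d ∈ Finset.univ.filter P, F2 (dyadSum β d) (f d)
          ∂(Measure.pi fun _ : V => F) := by
        refine integral_congr_ae (ae_of_all _ fun β => ?_)
        beta_reduce
        exact sum_filter_prod_eq P f (fun d b => F2 (dyadSum β d) b) (fun d => F2_sum _)

lemma betaP_dissociated (N₁ N₂ : Set V) (hdisj : Disjoint N₁ N₂) (f g : Dyad V → Bool) :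
    ∑ x ∈ Finset.univ.filter (fun x : Dyad V → Bool =>
        (∀ d : Dyad V, dyadIn d N₁ → x d = f d) ∧
        (∀ d : Dyad V, dyadIn d N₂ → x d = g d)), betaP F x
      = (∑ x ∈ Finset.univ.filter (fun x : Dyad V → Bool =>
            ∀ d : Dyad V, dyadIn d N₁ → x d = f d), betaP F x) *
        (∑ x ∈ Finset.univ.filter (fun x : Dyad V → Bool =>
            ∀ d : Dyad V, dyadIn d N₂ → x d = g d), betaP F x) := by
  have hnot : ∀ d : Dyad V, dyadIn d N₁ → dyadIn d N₂ → False := by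
    rintro ⟨d, hd⟩ h1 h2
    induction d using Sym2.ind with
    | _ i j =>
      exact Set.disjoint_left.mp hdisj (h1 i (Sym2.mem_mk_left i j))
        (h2 i (Sym2.mem_mk_left i j))
  set f' : Dyad V → Bool := fun d => if dyadIn d N₁ then f d else g d with hf'
  have hfilter : Finset.univ.filter (fun x : Dyad V → Bool =>
        (∀ d : Dyad V, dyadIn d N₁ → x d = f d) ∧
        (∀ d : Dyad V, dyadIn d N₂ → x d = g d))
      = Finset.univ.filter (fun x : Dyad V → Bool =>
        ∀ d : Dyad V, (dyadIn d N₁ ∨ dyadIn d N₂) → x d = f' d) := by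
    refine Finset.filter_congr fun x _ => ?_
    constructor
    · rintro ⟨h1, h2⟩ d (hd | hd)
      · rw [hf']; beta_reduce; rw [if_pos hd]; exact h1 d hd
      · rw [hf']; beta_reduce; rw [if_neg (fun hc => hnot d hc hd)]; exact h2 d hd
    · intro h
      constructor
      · intro d hd
        have := h d (Or.inl hd)
        rw [hf'] at this; beta_reduce at this; rwa [if_pos hd] at this
      · intro d hd
        have := h d (Or.inr hd)
        rw [hf'] at this; beta_reduce at this; rwa [if_neg (fun hc => hnot d hc hd)] at this
  have hdisjF : Disjoint (Finset.univ.filter fun d : Dyad V => dyadIn d N₁)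
      (Finset.univ.filter fun d : Dyad V => dyadIn d N₂) := by
    refine Finset.disjoint_left.mpr fun d hd1 hd2 => ?_
    exact hnot d (Finset.mem_filter.mp hd1).2 (Finset.mem_filter.mp hd2).2
  rw [hfilter, sum_betaP_filter F (fun d => dyadIn d N₁ ∨ dyadIn d N₂) f',
    sum_betaP_filter F (fun d => dyadIn d N₁) f, sum_betaP_filter F (fun d => dyadIn d N₂) g]
  have hsplit : ∀ β : V → ℝ,
      ∏ d ∈ Finset.univ.filter (fun d : Dyad V => dyadIn d N₁ ∨ dyadIn d N₂),
          F2 (dyadSum β d) (f' d)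
        = (∏ d ∈ Finset.univ.filter (fun d : Dyad V => dyadIn d N₁), F2 (dyadSum β d) (f d))
          * ∏ d ∈ Finset.univ.filter (fun d : Dyad V => dyadIn d N₂), F2 (dyadSum β d) (g d) := by
    intro β
    rw [Finset.filter_or, Finset.prod_union hdisjF]
    congr 1
    · refine Finset.prod_congr rfl fun d hd => ?_
      rw [hf']; beta_reduce; rw [if_pos (Finset.mem_filter.mp hd).2]
    · refine Finset.prod_congr rfl fun d hd => ?_
      rw [hf']; beta_reduce
      rw [if_neg (fun hc => hnot d hc (Finset.mem_filter.mp hd).2)]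
  calc ∫ β : V → ℝ, ∏ d ∈ Finset.univ.filter (fun d : Dyad V => dyadIn d N₁ ∨ dyadIn d N₂),
          F2 (dyadSum β d) (f' d) ∂(Measure.pi fun _ : V => F)
      = ∫ β : V → ℝ,
          (∏ d ∈ Finset.univ.filter (fun d : Dyad V => dyadIn d N₁), F2 (dyadSum β d) (f d))
          * ∏ d ∈ Finset.univ.filter (fun d : Dyad V => dyadIn d N₂), F2 (dyadSum β d) (g d)
          ∂(Measure.pi fun _ : V => F) :=
        integral_congr_ae (ae_of_all _ fun β => hsplit β)
    _ = (∫ β : V → ℝ, ∏ d ∈ Finset.univ.filter (fun d : Dyad V => dyadIn d N₁),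
            F2 (dyadSum β d) (f d) ∂(Measure.pi fun _ : V => F))
        * ∫ β : V → ℝ, ∏ d ∈ Finset.univ.filter (fun d : Dyad V => dyadIn d N₂),
            F2 (dyadSum β d) (g d) ∂(Measure.pi fun _ : V => F) := by
        refine integral_mul_of_disjoint F N₁ N₂ hdisj _ _ ?_ ?_
        · intro β β' h
          exact Finset.prod_congr rfl fun d hd =>
            by rw [dyadSum_congr d (Finset.mem_filter.mp hd).2 h]
        · intro β β' h
          exact Finset.prod_congr rfl fun d hd =>
            by rw [dyadSum_congr d (Finset.mem_filter.mp hd).2 h]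

end Main

/-- The marginal beta model `P` is a probability distribution on the set
of simple graphs on `N`, and it is (i) exchangeable, (ii) dissociated, and (iii)
summarized: `P(x)` depends on `x` only through its degree distribution. -/
theorem stmt19 {V : Type*} [Fintype V] [DecidableEq V]
    (F : Measure ℝ) [IsProbabilityMeasure F] :
    -- P is a probability distribution
    ((∀ x : Dyad V → Bool, 0 ≤ betaP F x) ∧
      ∑ x : Dyad V → Bool, betaP F x = 1) ∧
    -- (i) exchangeable
    (∀ (π : Equiv.Perm V) (x : Dyad V → Bool),
      betaP F (fun d => x (dyadPerm π d)) = betaP F x) ∧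
    -- (ii) dissociated
    (∀ N₁ N₂ : Set V, Disjoint N₁ N₂ → ∀ f g : Dyad V → Bool,
      ∑ x ∈ Finset.univ.filter (fun x : Dyad V → Bool =>
          (∀ d : Dyad V, dyadIn d N₁ → x d = f d) ∧
          (∀ d : Dyad V, dyadIn d N₂ → x d = g d)), betaP F x
        = (∑ x ∈ Finset.univ.filter (fun x : Dyad V → Bool =>
              ∀ d : Dyad V, dyadIn d N₁ → x d = f d), betaP F x) *
          (∑ x ∈ Finset.univ.filter (fun x : Dyad V → Bool =>
              ∀ d : Dyad V, dyadIn d N₂ → x d = g d), betaP F x)) ∧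
    -- (iii) summarized
    (∀ x y : Dyad V → Bool,
      (∀ j : ℕ, netDegDist x j = netDegDist y j) → betaP F x = betaP F y) := by
  refine ⟨⟨fun x => ?_, betaP_sum_one F⟩, betaP_perm F, betaP_dissociated F,
    betaP_summarized F⟩
  rw [betaP_eq]
  exact integral_nonneg fun β => Finset.prod_nonneg fun d _ => (F2_pos _ _).le
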